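/- For nonnegative integers m ≥ 1 and k: binomial(m+2k-1, k) - binomial(m+2k-1, k-1) = the sum over all compositions (x_1,...,x_m) of k into m nonnegative parts of the product Catalan(x_1) * Catalan(x_2) * ... * Catalan(x_m). -/

import Mathlib

open Finset Finset.Nat

private def catB (m k : ℕ) : ℤ :=
  ((m + 2 * k - 1).choose k : ℤ) -
    (if k = 0 then 0 else ((m + 2 * k - 1).choose (k - 1) : ℤ))

private def catF (m k : ℕ) : ℤ :=
  ∑ x ∈ Finset.Nat.antidiagonalTuple m k, ∏ i, (catalan (x i) : ℤ)

private lemma catF_split (m k : ℕ) :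
    catF (m + 1) k = ∑ p ∈ antidiagonal k, (catalan p.1 : ℤ) * catF m p.2 := by
  unfold catF
  have key : (∑ x ∈ antidiagonalTuple (m + 1) k, ∏ i, (catalan (x i) : ℤ))
      = ∑ q ∈ (antidiagonal k).sigma (fun p => antidiagonalTuple m p.2),
          (catalan q.1.1 : ℤ) * ∏ i, (catalan (q.2 i) : ℤ) := by
    refine Finset.sum_nbij' (fun x => ⟨(x 0, ∑ i, Fin.tail x i), Fin.tail x⟩)
      (fun q => Fin.cons q.1.1 q.2) ?_ ?_ ?_ ?_ ?_
    · intro x hx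
      rw [mem_antidiagonalTuple, Fin.sum_univ_succ] at hx
      simp only [Finset.mem_sigma, HasAntidiagonal.mem_antidiagonal, mem_antidiagonalTuple]
      exact ⟨hx, trivial⟩
    · rintro ⟨⟨a, b⟩, y⟩ hq
      simp only [Finset.mem_sigma, HasAntidiagonal.mem_antidiagonal, mem_antidiagonalTuple] at hq ⊢
      rw [Fin.sum_univ_succ, Fin.cons_zero]
      simp only [Fin.cons_succ]
      rw [hq.2, hq.1]
    · intro x _
      exact Fin.cons_self_tail x
    · rintro ⟨⟨a, b⟩, y⟩ hq
      simp only [Finset.mem_sigma, HasAntidiagonal.mem_antidiagonal, mem_antidiagonalTuple] at hq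
      simp [Fin.tail_cons, hq.2]
    · intro x _
      rw [Fin.prod_univ_succ]
      push_cast
      rfl
  rw [key, Finset.sum_sigma]
  refine Finset.sum_congr rfl fun p _ => ?_
  dsimp only
  rw [Finset.mul_sum]

private lemma sum_antidiagonal_assoc (k : ℕ) (g : ℕ → ℕ → ℕ → ℤ) :
    ∑ q ∈ antidiagonal k, ∑ r ∈ antidiagonal q.1, g r.1 r.2 q.2
      = ∑ p ∈ antidiagonal k, ∑ s ∈ antidiagonal p.2, g p.1 s.1 s.2 := by
  have key : ∑ a ∈ (antidiagonal k).sigma (fun q => antidiagonal q.1), g a.2.1 a.2.2 a.1.2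
      = ∑ a ∈ (antidiagonal k).sigma (fun p => antidiagonal p.2), g a.1.1 a.2.1 a.2.2 := by
    refine Finset.sum_nbij'
      (fun (a : (_ : ℕ × ℕ) × ℕ × ℕ) =>
        (⟨(a.2.1, a.2.2 + a.1.2), (a.2.2, a.1.2)⟩ : (_ : ℕ × ℕ) × ℕ × ℕ))
      (fun (a : (_ : ℕ × ℕ) × ℕ × ℕ) =>
        (⟨(a.1.1 + a.2.1, a.2.2), (a.1.1, a.2.1)⟩ : (_ : ℕ × ℕ) × ℕ × ℕ)) ?_ ?_ ?_ ?_ ?_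
    · rintro ⟨⟨a, b⟩, ⟨c, d⟩⟩ h
      simp only [Finset.mem_sigma, HasAntidiagonal.mem_antidiagonal] at h ⊢
      exact ⟨by omega, trivial⟩
    · rintro ⟨⟨a, b⟩, ⟨c, d⟩⟩ h
      simp only [Finset.mem_sigma, HasAntidiagonal.mem_antidiagonal] at h ⊢
      exact ⟨by omega, trivial⟩
    · rintro ⟨⟨a, b⟩, ⟨c, d⟩⟩ h
      simp only [Finset.mem_sigma, HasAntidiagonal.mem_antidiagonal] at h
      obtain ⟨h1, h2⟩ := h
      dsimp only
      rw [h2]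
    · rintro ⟨⟨a, b⟩, ⟨c, d⟩⟩ h
      simp only [Finset.mem_sigma, HasAntidiagonal.mem_antidiagonal] at h
      obtain ⟨h1, h2⟩ := h
      dsimp only
      rw [h2]
    · rintro ⟨⟨a, b⟩, ⟨c, d⟩⟩ _
      rfl
  rw [Finset.sum_sigma, Finset.sum_sigma] at key
  exact key

private lemma catF_rec (m k : ℕ) :
    catF (m + 1) (k + 1) = catF m (k + 1) + catF (m + 2) k := by
  rw [catF_split, Finset.Nat.sum_antidiagonal_succ]
  simp only [catalan_zero, Nat.cast_one, one_mul]
  congr 1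
  have h2 : catF (m + 2) k = ∑ p ∈ antidiagonal k, ∑ s ∈ antidiagonal p.2,
      (catalan p.1 : ℤ) * ((catalan s.1 : ℤ) * catF m s.2) := by
    rw [catF_split]
    refine Finset.sum_congr rfl fun p _ => ?_
    rw [catF_split, Finset.mul_sum]
  rw [h2, ← sum_antidiagonal_assoc k (fun a b c => (catalan a : ℤ) * ((catalan b : ℤ) * catF m c))]
  refine Finset.sum_congr rfl fun q _ => ?_
  rw [catalan_succ']
  push_cast
  rw [Finset.sum_mul]
  refine Finset.sum_congr rfl fun r _ => ?_
  ring

private lemma catB_rec (m k : ℕ) :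
    catB (m + 1) (k + 1) = catB m (k + 1) + catB (m + 2) k := by
  unfold catB
  rcases k with _ | k
  · norm_num
    omega
  · have e1 : m + 1 + 2 * (k + 1 + 1) - 1 = (m + 2 * (k + 1) + 1) + 1 := by omega
    have e2 : m + 2 * (k + 1 + 1) - 1 = m + 2 * (k + 1) + 1 := by omega
    have e3 : m + 2 + 2 * (k + 1) - 1 = m + 2 * (k + 1) + 1 := by omega
    rw [e1, e2, e3]
    simp only [Nat.succ_ne_zero, if_false, Nat.add_sub_cancel]
    rw [Nat.choose_succ_succ (m + 2 * (k + 1) + 1) (k + 1),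
      Nat.choose_succ_succ (m + 2 * (k + 1) + 1) k]
    push_cast
    ring

private lemma catF_eq_catB : ∀ k m, catF m k = catB m k := by
  intro k
  induction k with
  | zero =>
    intro m
    unfold catF catB
    rw [antidiagonalTuple_zero_right]
    simp
  | succ k ih =>
    intro m
    induction m with
    | zero =>
      unfold catF catB
      rw [antidiagonalTuple_zero_succ]
      have : 0 + 2 * (k + 1) - 1 = 2 * k + 1 := by omega
      rw [this]
      simp only [Nat.succ_ne_zero, if_false, Nat.add_sub_cancel, Finset.sum_empty]
      rw [Nat.choose_symm_half]
      ring
    | succ m ihm =>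
      rw [catF_rec, catB_rec, ihm, ih (m + 2)]

theorem catalan_triangle_eq_sum_prod_catalan (m k : ℕ) (hm : 1 ≤ m) :
    ((m + 2 * k - 1).choose k : ℤ) -
        (if k = 0 then 0 else ((m + 2 * k - 1).choose (k - 1) : ℤ)) =
      ∑ x ∈ Finset.Nat.antidiagonalTuple m k, ∏ i, (catalan (x i) : ℤ) := by
  exact (catF_eq_catB k m).symm
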